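/- Let r,s,t,u be integers with ru−st = ±1 and t ≠ 0. Then the abelianization of G(r,s,t,u) is a finite group. -/

import Mathlib

/-- The relators of the presentation of the fundamental group of the sapphire
Sol 3-manifold determined by the matrix `[[r, s], [t, u]]`:
`a·b·a⁻¹·b`, `c²·a^(−2r)·b^(−s)` and `c·a^(2t)·b^u·c⁻¹·a^(2t)·b^u`,
where `a, b, c` are the generators `of 0, of 1, of 2`. -/
def sapphireRels (r s t u : ℤ) : Set (FreeGroup (Fin 3)) :=
  { FreeGroup.of 0 * FreeGroup.of 1 * (FreeGroup.of 0)⁻¹ * FreeGroup.of 1,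
    FreeGroup.of 2 ^ (2 : ℤ) * FreeGroup.of 0 ^ (-(2 * r)) * FreeGroup.of 1 ^ (-s),
    FreeGroup.of 2 * FreeGroup.of 0 ^ (2 * t) * FreeGroup.of 1 ^ u * (FreeGroup.of 2)⁻¹ *
      FreeGroup.of 0 ^ (2 * t) * FreeGroup.of 1 ^ u }

/-- The fundamental group `G(r,s,t,u)` of the sapphire Sol 3-manifold. -/
abbrev SapphireGroup (r s t u : ℤ) := PresentedGroup (sapphireRels r s t u)

instance : Group.FG (FreeGroup (Fin 3)) := by
  rw [Group.fg_iff]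
  exact ⟨Set.range FreeGroup.of, FreeGroup.closure_range_of _, Set.finite_range _⟩

private lemma aux1 {G : Type*} [CommGroup G] {a b : G} (h : a * b * a⁻¹ * b = 1) :
    b ^ (2 : ℤ) = 1 := by
  rw [← h, zpow_two]
  simp [mul_comm, mul_left_comm, mul_assoc]

private lemma aux3 {G : Type*} [CommGroup G] {c x y : G} (h : c * x * y * c⁻¹ * x * y = 1) :
    x * x * (y * y) = 1 := by
  rw [mul_assoc c x y, mul_inv_cancel_comm] at h
  rw [← h]
  simp [mul_comm, mul_left_comm, mul_assoc]

private lemma aux2 {G : Type*} [CommGroup G] {c x y : G}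
    (h : c ^ (2:ℤ) * x⁻¹ * y⁻¹ = 1) : c ^ (2:ℤ) = x * y := by
  rw [mul_assoc, ← mul_inv_rev, mul_inv_eq_one] at h
  rw [h, mul_comm]

theorem stmt19 (r s t u : ℤ) (h : r * u - s * t = 1 ∨ r * u - s * t = -1) (ht : t ≠ 0) :
    Finite (Abelianization (SapphireGroup r s t u)) := by
  have hab : Function.Surjective (Abelianization.of (G := SapphireGroup r s t u)) :=
    fun x => QuotientGroup.mk_surjective x
  have hsurj : Function.Surjective
      ((Abelianization.of (G := SapphireGroup r s t u)).comp
        (PresentedGroup.mk (sapphireRels r s t u))) :=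
    hab.comp (PresentedGroup.mk_surjective _)
  haveI : Group.FG (Abelianization (SapphireGroup r s t u)) := Group.fg_of_surjective hsurj
  set φ := (Abelianization.of (G := SapphireGroup r s t u)).comp
    (PresentedGroup.mk (sapphireRels r s t u)) with hφ
  have hrel : ∀ w ∈ sapphireRels r s t u, φ w = 1 := by
    intro w hw
    have : PresentedGroup.mk (sapphireRels r s t u) w = 1 :=
      (QuotientGroup.eq_one_iff _).2 (Subgroup.subset_normalClosure hw)
    simp [hφ, MonoidHom.comp_apply, this]
  set A := φ (FreeGroup.of 0) with hA'
  set B := φ (FreeGroup.of 1) with hB'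
  set C := φ (FreeGroup.of 2) with hC'
  have h1 : A * B * A⁻¹ * B = 1 := by
    have := hrel _ (Set.mem_insert _ _)
    simpa [hA', hB'] using this
  have h2 : C ^ (2:ℤ) * (A ^ (2*r))⁻¹ * (B ^ s)⁻¹ = 1 := by
    have := hrel _ (Set.mem_insert_of_mem _ (Set.mem_insert _ _))
    simpa [hA', hB', hC', zpow_neg] using this
  have h3 : C * A ^ (2*t) * B ^ u * C⁻¹ * A ^ (2*t) * B ^ u = 1 := by
    have := hrel _ (Set.mem_insert_of_mem _ (Set.mem_insert_of_mem _ rfl))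
    simpa [hA', hB', hC'] using this
  have hB : B ^ (2:ℤ) = 1 := aux1 h1
  have hAB : A ^ (2*t) * A ^ (2*t) * (B ^ u * B ^ u) = 1 := aux3 h3
  have hBu : B ^ u * B ^ u = 1 := by
    rw [← zpow_add, show u + u = 2 * u by ring, zpow_mul, hB, one_zpow]
  have hA : A ^ (4*t) = 1 := by
    rw [hBu, mul_one, ← zpow_add, show 2*t + 2*t = 4*t by ring] at hAB
    exact hAB
  have hC2 : C ^ (2:ℤ) = A ^ (2*r) * B ^ s := aux2 h2
  have hC : C ^ (8*t) = 1 := by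
    have : C ^ (8*t) = (C ^ (2:ℤ)) ^ (4*t) := by
      rw [← zpow_mul]; ring_nf
    have e1 : A ^ (2*r*(4*t)) = 1 := by
      rw [show 2*r*(4*t) = 4*t*(2*r) by ring, zpow_mul, hA, one_zpow]
    have e2 : B ^ (s*(4*t)) = 1 := by
      rw [show s*(4*t) = 2*(s*(2*t)) by ring, zpow_mul, hB, one_zpow]
    rw [this, hC2, mul_zpow, ← zpow_mul, ← zpow_mul, e1, e2, one_mul]
  have hfin : ∀ w : FreeGroup (Fin 3), IsOfFinOrder (φ w) := by
    intro w
    induction w using FreeGroup.induction_on with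
    | C1 => simp
    | of x =>
        have hAo : IsOfFinOrder A :=
          isOfFinOrder_iff_zpow_eq_one.2 ⟨4*t, by simpa using ht, hA⟩
        have hBo : IsOfFinOrder B :=
          isOfFinOrder_iff_zpow_eq_one.2 ⟨2, by norm_num, hB⟩
        have hCo : IsOfFinOrder C :=
          isOfFinOrder_iff_zpow_eq_one.2 ⟨8*t, by simpa using ht, hC⟩
        fin_cases x
        · exact hAo
        · exact hBo
        · exact hCo
    | inv_of x hx => simpa using hx.inv
    | mul x y hx hy => simpa using hx.mul hy
  have htor : Monoid.IsTorsion (Abelianization (SapphireGroup r s t u)) := by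
    intro x
    obtain ⟨w, rfl⟩ := hsurj x
    exact hfin w
  exact CommGroup.finite_of_fg_torsion _ htor
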